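/- Let d ≥ 1, let f ≥ 0, and let M be a real symmetric d×d matrix. Then sup over all positive semidefinite symmetric d×d matrices a with tr(a) = 1 of [tr(a·M) + (det a)^(1/d)·f] equals 0 if and only if M is negative semidefinite and det(−M) = d^(−d)·f^d. -/

import Mathlib

open Matrix Finset

namespace BellmanAux

variable {d : ℕ}

lemma diag_nonneg {a : Matrix (Fin d) (Fin d) ℝ} (ha : a.PosSemidef) (i : Fin d) :
    0 ≤ a i i := by
  have h := ha.dotProduct_mulVec_nonneg (Pi.single i 1)
  simpa [mulVec_single, single_dotProduct, star_trivial] using h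

lemma trace_nonneg {a : Matrix (Fin d) (Fin d) ℝ} (ha : a.PosSemidef) :
    0 ≤ a.trace := by
  rw [Matrix.trace]
  exact Finset.sum_nonneg fun i _ => diag_nonneg ha i

lemma entry_le_one {a : Matrix (Fin d) (Fin d) ℝ} (ha : a.PosSemidef) (htr : a.trace = 1)
    (i j : Fin d) : |a i j| ≤ 1 := by
  have hdiag : ∀ k, 0 ≤ a k k := diag_nonneg ha
  have hdle : ∀ k, a k k ≤ 1 := by
    intro k
    have h : a k k ≤ a.trace := by
      rw [Matrix.trace]
      exact Finset.single_le_sum (fun l _ => hdiag l) (Finset.mem_univ k)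
    rw [htr] at h; exact h
  rcases eq_or_ne i j with rfl | hij
  · rw [abs_of_nonneg (hdiag i)]; exact hdle i
  · have hsym : a j i = a i j := by
      have h := ha.1.apply i j
      simpa using h
    have h1 := ha.dotProduct_mulVec_nonneg (Pi.single i 1 + Pi.single j 1)
    have h2 := ha.dotProduct_mulVec_nonneg (Pi.single i 1 - Pi.single j 1)
    simp [star_trivial, mulVec_add, mulVec_sub, add_dotProduct, sub_dotProduct, dotProduct_add,
      dotProduct_sub, mulVec_single, single_dotProduct] at h1 h2
    have hsum : a i i + a j j ≤ 1 := by
      have h3 : ∑ k ∈ ({i, j} : Finset (Fin d)), a k k ≤ ∑ k, a k k :=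
        Finset.sum_le_sum_of_subset_of_nonneg (Finset.subset_univ _)
          (fun k _ _ => hdiag k)
      rw [Finset.sum_pair hij] at h3
      rw [Matrix.trace] at htr
      calc a i i + a j j ≤ ∑ k, a k k := h3
        _ = 1 := htr
    rw [abs_le]
    constructor <;> nlinarith [h1, h2, hsym]

lemma amgm_scalar (hd : 1 ≤ d) (z : Fin d → ℝ) (hz : ∀ i, 0 ≤ z i) :
    (d : ℝ) * (∏ i, z i) ^ ((1:ℝ)/d) ≤ ∑ i, z i := by
  have hd0 : (d : ℝ) ≠ 0 := Nat.cast_ne_zero.mpr (by omega)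
  have h := Real.geom_mean_le_arith_mean_weighted Finset.univ (fun _ => 1/(d:ℝ)) z
    (fun i _ => by positivity)
    (by simp [Finset.sum_const, Finset.card_univ, nsmul_eq_mul]; field_simp)
    (fun i _ => hz i)
  rw [Real.finset_prod_rpow _ _ (fun i _ => hz i)] at h
  rw [← Finset.mul_sum] at h
  calc (d:ℝ) * (∏ i, z i) ^ ((1:ℝ)/d)
      ≤ (d:ℝ) * ((1/(d:ℝ)) * ∑ i, z i) := by
        apply mul_le_mul_of_nonneg_left h (by positivity)
    _ = ∑ i, z i := by field_simp

lemma conj_trace {U : Matrix (Fin d) (Fin d) ℝ} (hU : star U * U = 1) (w : Fin d → ℝ) :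
    (U * diagonal w * star U).trace = ∑ i, w i := by
  rw [Matrix.trace_mul_cycle, hU, Matrix.one_mul, Matrix.trace_diagonal]

lemma conj_det {U : Matrix (Fin d) (Fin d) ℝ} (hU : U * star U = 1) (w : Fin d → ℝ) :
    (U * diagonal w * star U).det = ∏ i, w i := by
  rw [Matrix.det_mul, Matrix.det_mul, mul_right_comm, ← Matrix.det_mul, hU, Matrix.det_one,
    one_mul, Matrix.det_diagonal]

lemma conj_mul_conj {U : Matrix (Fin d) (Fin d) ℝ} (hU : star U * U = 1) (w v : Fin d → ℝ) :
    (U * diagonal w * star U) * (U * diagonal v * star U)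
      = U * diagonal (fun i => w i * v i) * star U := by
  have key : ∀ x : Matrix (Fin d) (Fin d) ℝ, star U * (U * x) = x := by
    intro x; rw [← Matrix.mul_assoc, hU, Matrix.one_mul]
  simp only [Matrix.mul_assoc]
  rw [key, ← Matrix.mul_assoc (diagonal w) (diagonal v), Matrix.diagonal_mul_diagonal]

lemma conj_posSemidef {U : Matrix (Fin d) (Fin d) ℝ} (w : Fin d → ℝ) (hw : ∀ i, 0 ≤ w i) :
    (U * diagonal w * star U).PosSemidef := by
  have h := (Matrix.PosSemidef.diagonal (n := Fin d) (d := w)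
    (fun i => hw i)).mul_mul_conjTranspose_same U
  simpa [Matrix.star_eq_conjTranspose] using h

lemma herm_facts {c : Matrix (Fin d) (Fin d) ℝ} (hc : c.IsHermitian) :
    ∃ U : Matrix (Fin d) (Fin d) ℝ, star U * U = 1 ∧ U * star U = 1 ∧
      c = U * Matrix.diagonal hc.eigenvalues * star U := by
  refine ⟨hc.eigenvectorUnitary.1, ?_, ?_, ?_⟩
  · exact Matrix.mem_unitaryGroup_iff'.mp hc.eigenvectorUnitary.2
  · exact Matrix.mem_unitaryGroup_iff.mp hc.eigenvectorUnitary.2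
  · have h := hc.spectral_theorem
    simpa [RCLike.ofReal_real_eq_id] using h

end BellmanAux

namespace BellmanAux

variable {d : ℕ}

lemma det_eq_prod {c : Matrix (Fin d) (Fin d) ℝ} (hc : c.IsHermitian) :
    c.det = ∏ i, hc.eigenvalues i := by
  simpa [RCLike.ofReal_real_eq_id] using hc.det_eq_prod_eigenvalues

lemma psd_det_nonneg {c : Matrix (Fin d) (Fin d) ℝ} (hc : c.PosSemidef) : 0 ≤ c.det := by
  rw [det_eq_prod hc.1]
  exact Finset.prod_nonneg fun i _ => hc.eigenvalues_nonneg i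

lemma trace_eq_sum {c : Matrix (Fin d) (Fin d) ℝ} (hc : c.IsHermitian) :
    c.trace = ∑ i, hc.eigenvalues i := by
  obtain ⟨U, hU1, _, hspec⟩ := herm_facts hc
  conv_lhs => rw [hspec]
  rw [conj_trace hU1]

lemma psd_trace_ge (hd : 1 ≤ d) {c : Matrix (Fin d) (Fin d) ℝ} (hc : c.PosSemidef) :
    (d : ℝ) * c.det ^ ((1:ℝ)/d) ≤ c.trace := by
  rw [det_eq_prod hc.1, trace_eq_sum hc.1]
  exact amgm_scalar hd _ hc.eigenvalues_nonneg

lemma sqrt_conj {a b : Matrix (Fin d) (Fin d) ℝ} (ha : a.PosSemidef) (hb : b.PosSemidef) :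
    ∃ c : Matrix (Fin d) (Fin d) ℝ, c.PosSemidef ∧ (a * b).trace = c.trace ∧
      (a * b).det = c.det := by
  classical
  obtain ⟨s, hsP, hss⟩ : ∃ s : Matrix (Fin d) (Fin d) ℝ, s.PosSemidef ∧ s * s = a := by
    obtain ⟨U, hU1, _, hspec⟩ := herm_facts ha.1
    refine ⟨U * diagonal (fun i => Real.sqrt (ha.1.eigenvalues i)) * star U,
      conj_posSemidef _ (fun i => Real.sqrt_nonneg _), ?_⟩
    rw [conj_mul_conj hU1]
    have hfun : (fun i => Real.sqrt (ha.1.eigenvalues i) * Real.sqrt (ha.1.eigenvalues i))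
        = ha.1.eigenvalues := funext fun i => Real.mul_self_sqrt (ha.eigenvalues_nonneg i)
    rw [hfun]
    exact hspec.symm
  refine ⟨s * b * s, ?_, ?_, ?_⟩
  · have h := hb.mul_mul_conjTranspose_same s
    rwa [hsP.1.eq] at h
  · conv_lhs => rw [← hss]
    rw [Matrix.mul_assoc, Matrix.trace_mul_comm, Matrix.mul_assoc]
  · conv_lhs => rw [← hss]
    rw [Matrix.det_mul, Matrix.det_mul, Matrix.det_mul, Matrix.det_mul]
    ring

lemma trace_mul_nonneg {a b : Matrix (Fin d) (Fin d) ℝ} (ha : a.PosSemidef)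
    (hb : b.PosSemidef) : 0 ≤ (a * b).trace := by
  obtain ⟨c, hc, ht, _⟩ := sqrt_conj ha hb
  rw [ht]
  exact trace_nonneg hc

lemma trace_mul_amgm (hd : 1 ≤ d) {a b : Matrix (Fin d) (Fin d) ℝ} (ha : a.PosSemidef)
    (hb : b.PosSemidef) : (d : ℝ) * (a.det * b.det) ^ ((1:ℝ)/d) ≤ (a * b).trace := by
  obtain ⟨c, hc, ht, hdet⟩ := sqrt_conj ha hb
  rw [ht, ← Matrix.det_mul, hdet]
  exact psd_trace_ge hd hc

end BellmanAux

namespace BellmanAux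

variable {d : ℕ}

lemma wstar (hd : 1 ≤ d) (lam : Fin d → ℝ) (hl : ∀ i, 0 < lam i) :
    0 < ∑ i, (lam i)⁻¹ ∧
    ∃ w : Fin d → ℝ, (∀ i, 0 ≤ w i) ∧ (∑ i, w i) = 1 ∧
      (∑ i, w i * lam i) = d / (∑ i, (lam i)⁻¹) ∧
      (∏ i, w i) ^ ((1:ℝ)/d) = ((∏ i, lam i) ^ ((1:ℝ)/d))⁻¹ / (∑ i, (lam i)⁻¹) := by
  have hne : (Finset.univ : Finset (Fin d)).Nonempty := by
    have : Nonempty (Fin d) := ⟨⟨0, by omega⟩⟩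
    exact Finset.univ_nonempty
  have hS : 0 < ∑ i, (lam i)⁻¹ :=
    Finset.sum_pos (fun i _ => inv_pos.mpr (hl i)) hne
  have hd0 : d ≠ 0 := by omega
  have hP : 0 < ∏ i, lam i := Finset.prod_pos (fun i _ => hl i)
  refine ⟨hS, fun i => (lam i)⁻¹ / (∑ i, (lam i)⁻¹), ?_, ?_, ?_, ?_⟩
  · intro i; exact div_nonneg (inv_pos.mpr (hl i)).le hS.le
  · rw [← Finset.sum_div, div_self hS.ne']
  · have : ∀ i, (lam i)⁻¹ / (∑ i, (lam i)⁻¹) * lam i = 1 / (∑ i, (lam i)⁻¹) := by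
      intro i
      rw [div_mul_eq_mul_div, inv_mul_cancel₀ (hl i).ne']
    rw [Finset.sum_congr rfl (fun i _ => this i)]
    rw [Finset.sum_const, Finset.card_univ, Fintype.card_fin, nsmul_eq_mul]
    ring
  · rw [Finset.prod_div_distrib, Finset.prod_const, Finset.card_univ, Fintype.card_fin,
      Finset.prod_inv_distrib]
    rw [Real.div_rpow (by positivity) (by positivity),
      Real.inv_rpow hP.le, one_div,
      Real.pow_rpow_inv_natCast hS.le hd0]

lemma wt (hd : 1 ≤ d) (lam : Fin d → ℝ) (j0 : Fin d) (hj0 : lam j0 = 0)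
    {t : ℝ} (ht0 : 0 < t) (htd : t ≤ 1/d) :
    ∃ w : Fin d → ℝ, (∀ i, 0 ≤ w i) ∧ (∑ i, w i) = 1 ∧
      (∑ i, w i * lam i) = t * ∑ i, lam i ∧
      (1/(d:ℝ)) * t^(d-1) ≤ ∏ i, w i := by
  have hd0 : (0:ℝ) < d := by positivity
  have hge : (1:ℝ)/d ≤ 1 - ((d:ℝ)-1) * t := by
    have h1 : ((d:ℝ)-1) * t ≤ ((d:ℝ)-1) * (1/d) := by
      apply mul_le_mul_of_nonneg_left htd
      have : (1:ℝ) ≤ (d:ℝ) := by exact_mod_cast hd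
      linarith
    have h2 : ((d:ℝ)-1) * (1/d) = 1 - 1/d := by field_simp
    linarith
  set u : Fin d → ℝ := Pi.single j0 (1 - (d:ℝ)*t) with hu
  set w : Fin d → ℝ := fun j => t + u j with hw
  have huj0 : u j0 = 1 - (d:ℝ)*t := by rw [hu, Pi.single_eq_same]
  have huother : ∀ j, j ≠ j0 → u j = 0 := by
    intro j hj; rw [hu, Pi.single_eq_of_ne hj]
  have hwj0 : w j0 = 1 - ((d:ℝ)-1)*t := by rw [hw]; simp only [huj0]; ring
  have hwother : ∀ j, j ≠ j0 → w j = t := by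
    intro j hj; rw [hw]; simp only [huother j hj]; ring
  have hwnonneg : ∀ i, 0 ≤ w i := by
    intro i
    rcases eq_or_ne i j0 with rfl | hij
    · rw [hwj0]; linarith [hge, (by positivity : (0:ℝ) < 1/d)]
    · rw [hwother i hij]; exact ht0.le
  refine ⟨w, hwnonneg, ?_, ?_, ?_⟩
  · rw [hw]
    rw [Finset.sum_add_distrib, Finset.sum_const, Finset.card_univ, Fintype.card_fin,
      nsmul_eq_mul, hu, Finset.sum_pi_single']
    simp only [Finset.mem_univ, if_true]
    ring
  · have : ∀ i, w i * lam i = t * lam i + u i * lam i := fun i => by rw [hw]; ring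
    rw [Finset.sum_congr rfl (fun i _ => this i), Finset.sum_add_distrib, ← Finset.mul_sum]
    have h2 : ∑ i, u i * lam i = (1 - (d:ℝ)*t) * lam j0 := by
      rw [Finset.sum_eq_single j0]
      · rw [huj0]
      · intro b _ hb; rw [huother b hb, zero_mul]
      · intro h; exact absurd (Finset.mem_univ j0) h
    rw [h2, hj0]
    ring
  · have hprod : ∏ i, w i = w j0 * t^(d-1) := by
      rw [← Finset.mul_prod_erase Finset.univ w (Finset.mem_univ j0)]
      congr 1
      rw [Finset.prod_congr rfl (fun j hj => hwother j (Finset.ne_of_mem_erase hj)),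
        Finset.prod_const, Finset.card_erase_of_mem (Finset.mem_univ j0),
        Finset.card_univ, Fintype.card_fin]
    rw [hprod, hwj0]
    have ht1 : 0 ≤ t^(d-1) := by positivity
    nlinarith [hge]

end BellmanAux

namespace BellmanAux

variable {d : ℕ}

lemma conj_psd_iff {U : Matrix (Fin d) (Fin d) ℝ} (hU1 : star U * U = 1)
    (w : Fin d → ℝ) (h : (U * diagonal w * star U).PosSemidef) : ∀ i, 0 ≤ w i := by
  have e : diagonal w = star U * (U * diagonal w * star U) * U := by
    calc diagonal w = (star U * U) * diagonal w * (star U * U) := by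
          rw [hU1, Matrix.one_mul, Matrix.mul_one]
      _ = star U * (U * diagonal w * star U) * U := by
          simp only [Matrix.mul_assoc]
  have h2 := h.conjTranspose_mul_mul_same U
  rw [← Matrix.star_eq_conjTranspose, ← e] at h2
  exact fun i => posSemidef_diagonal_iff.mp h2 i

lemma single_facts (j0 : Fin d) :
    (∀ i, 0 ≤ Pi.single (M := fun _ => ℝ) j0 1 i) ∧
      ((∑ i, Pi.single (M := fun _ => ℝ) j0 1 i) = 1) ∧
      (∀ lam : Fin d → ℝ,
        (∑ i, Pi.single (M := fun _ => ℝ) j0 1 i * lam i) = lam j0) := by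
  refine ⟨?_, ?_, ?_⟩
  · intro i
    rcases eq_or_ne i j0 with rfl | h
    · simp
    · rw [Pi.single_eq_of_ne h]
  · rw [Finset.sum_pi_single']; simp
  · intro lam
    rw [Finset.sum_eq_single j0]
    · simp
    · intro b _ hb; rw [Pi.single_eq_of_ne hb, zero_mul]
    · intro h; exact absurd (Finset.mem_univ j0) h

end BellmanAux

set_option maxHeartbeats 1000000 in
open BellmanAux in
/-- The Bellman equation
`sup_{a PSD symmetric, tr a = 1} [tr (a * M) + (det a)^(1/d) * f] = 0`
holds iff `M` is negative semidefinite and `det (−M) = d^(−d) * f^d`. -/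
theorem bellman_iff_mongeAmpere (d : ℕ) (hd : 1 ≤ d) (f : ℝ) (hf : 0 ≤ f)
    (M : Matrix (Fin d) (Fin d) ℝ) (hMsymm : M.IsSymm) :
    sSup ((fun a : Matrix (Fin d) (Fin d) ℝ =>
        (a * M).trace + a.det ^ ((1 : ℝ) / d) * f) ''
      {a : Matrix (Fin d) (Fin d) ℝ | a.PosSemidef ∧ a.trace = 1}) = 0 ↔
    (-M).PosSemidef ∧ (-M).det = (d : ℝ) ^ (-(d : ℤ)) * f ^ d := by
  classical
  have hdR : (0:ℝ) < d := by
    have : 0 < d := by omega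
    exact_mod_cast this
  have hdne : d ≠ 0 := by omega
  set F : Matrix (Fin d) (Fin d) ℝ → ℝ :=
    fun a => (a * M).trace + a.det ^ ((1 : ℝ) / d) * f with hF
  set S : Set ℝ := F '' {a : Matrix (Fin d) (Fin d) ℝ | a.PosSemidef ∧ a.trace = 1} with hSdef
  have hNh : (-M).IsHermitian := by
    rw [Matrix.IsHermitian, Matrix.conjTranspose_eq_transpose_of_trivial,
      Matrix.transpose_neg, hMsymm.eq]
  obtain ⟨U, hU1, hU2, hspec⟩ := herm_facts hNh
  set lam : Fin d → ℝ := hNh.eigenvalues with hlam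
  clear_value lam
  have hdetN : (-M).det = ∏ i, lam i := by
    conv_lhs => rw [hspec]
    exact conj_det hU2 lam
  -- the value of F on conjugated diagonal matrices
  have htraceM : ∀ w : Fin d → ℝ,
      ((U * diagonal w * star U) * M).trace = -∑ i, w i * lam i := by
    intro w
    have h1 : (U * diagonal w * star U) * M = -((U * diagonal w * star U) * (-M)) := by
      rw [Matrix.mul_neg, neg_neg]
    rw [h1, Matrix.trace_neg, neg_inj]
    conv_lhs => rw [hspec]
    rw [conj_mul_conj hU1, conj_trace hU1]
  have hmem : ∀ w : Fin d → ℝ, (∀ i, 0 ≤ w i) → (∑ i, w i) = 1 →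
      (-∑ i, w i * lam i + (∏ i, w i) ^ ((1:ℝ)/d) * f) ∈ S := by
    intro w hw0 hw1
    refine ⟨U * diagonal w * star U, ⟨conj_posSemidef w hw0, ?_⟩, ?_⟩
    · rw [conj_trace hU1]; exact hw1
    · simp only [hF]
      rw [htraceM w, conj_det hU2]
  have hnonempty : S.Nonempty := by
    refine ⟨_, hmem (fun _ => 1/(d:ℝ)) (fun i => by positivity) ?_⟩
    rw [Finset.sum_const, Finset.card_univ, Fintype.card_fin, nsmul_eq_mul]
    field_simp
  have hbdd : BddAbove S := by
    refine ⟨(∑ i, ∑ j, |M j i|) + f, ?_⟩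
    rintro x ⟨a, ⟨haP, haT⟩, rfl⟩
    have h1 : (a * M).trace ≤ ∑ i, ∑ j, |M j i| := by
      rw [Matrix.trace]
      apply Finset.sum_le_sum
      intro i _
      rw [Matrix.diag_apply, Matrix.mul_apply]
      apply Finset.sum_le_sum
      intro j _
      calc a i j * M j i ≤ |a i j * M j i| := le_abs_self _
        _ = |a i j| * |M j i| := abs_mul _ _
        _ ≤ 1 * |M j i| :=
            mul_le_mul_of_nonneg_right (entry_le_one haP haT i j) (abs_nonneg _)
        _ = |M j i| := one_mul _
    have h2 : a.det ^ ((1:ℝ)/d) * f ≤ f := by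
      apply mul_le_of_le_one_left hf
      have h3 := psd_trace_ge hd haP
      rw [haT] at h3
      nlinarith [Real.rpow_nonneg (psd_det_nonneg haP) ((1:ℝ)/d),
        (show (1:ℝ) ≤ d by exact_mod_cast hd)]
    simp only [hF]
    linarith
  constructor
  · -- forward direction
    intro hsup
    have hub : ∀ x ∈ S, x ≤ 0 := fun x hx => le_of_le_of_eq (le_csSup hbdd hx) hsup
    have hwle : ∀ w : Fin d → ℝ, (∀ i, 0 ≤ w i) → (∑ i, w i) = 1 →
        (∏ i, w i) ^ ((1:ℝ)/d) * f ≤ ∑ i, w i * lam i := by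
      intro w h1 h2
      have h := hub _ (hmem w h1 h2)
      linarith
    have hlam0 : ∀ j, 0 ≤ lam j := by
      intro j
      obtain ⟨hs0, hs1, hs2⟩ := single_facts j
      have h := hwle _ hs0 hs1
      rw [hs2 lam] at h
      have h4 : 0 ≤ (∏ i, Pi.single (M := fun _ => ℝ) j 1 i) ^ ((1:ℝ)/d) * f := by
        apply mul_nonneg (Real.rpow_nonneg ?_ _) hf
        exact Finset.prod_nonneg fun i _ => hs0 i
      linarith
    have hNpsd : (-M).PosSemidef := by
      rw [hspec]; exact conj_posSemidef lam hlam0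
    refine ⟨hNpsd, ?_⟩
    by_cases hzero : ∃ j, lam j = 0
    · obtain ⟨j0, hj0⟩ := hzero
      have hT : 0 ≤ ∑ i, lam i := Finset.sum_nonneg fun i _ => hlam0 i
      have hkey : ∀ t : ℝ, 0 < t → t ≤ 1/d →
          f ≤ (d:ℝ) * (∑ i, lam i) * t ^ ((1:ℝ)/d) := by
        intro t ht0 htd
        obtain ⟨w, hw0, hw1, hwl, hwp⟩ := wt hd lam j0 hj0 ht0 htd
        have h := hwle w hw0 hw1
        rw [hwl] at h
        set A : ℝ := (t^(d-1) : ℝ) ^ ((1:ℝ)/d) with hA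
        have hApos : 0 < A := Real.rpow_pos_of_pos (by positivity) _
        have e1 : ((1/(d:ℝ)) * t^(d-1)) ^ ((1:ℝ)/d) ≤ (∏ i, w i) ^ ((1:ℝ)/d) :=
          Real.rpow_le_rpow (by positivity) hwp (by positivity)
        have e2 : ((1/(d:ℝ)) * t^(d-1)) ^ ((1:ℝ)/d)
            = (1/(d:ℝ)) ^ ((1:ℝ)/d) * A :=
          Real.mul_rpow (by positivity) (by positivity)
        have e3 : (1/(d:ℝ)) ≤ (1/(d:ℝ)) ^ ((1:ℝ)/d) := by
          have h1d : (1:ℝ)/d ≤ 1 := by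
            rw [div_le_one hdR]; exact_mod_cast hd
          calc (1/(d:ℝ)) = (1/(d:ℝ)) ^ (1:ℝ) := (Real.rpow_one _).symm
            _ ≤ (1/(d:ℝ)) ^ ((1:ℝ)/d) :=
              Real.rpow_le_rpow_of_exponent_ge (by positivity) h1d h1d
        have e4 : A * t ^ ((1:ℝ)/d) = t := by
          rw [hA, ← Real.rpow_natCast t (d-1), ← Real.rpow_mul ht0.le,
            ← Real.rpow_add ht0]
          rw [show (((d-1 : ℕ)):ℝ) * ((1:ℝ)/d) + (1:ℝ)/d = 1 by
            rw [Nat.cast_sub hd]; field_simp; push_cast; ring]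
          exact Real.rpow_one t
        have c1 : f * ((1/(d:ℝ)) * A) ≤ t * ∑ i, lam i := by
          calc f * ((1/(d:ℝ)) * A) ≤ f * ((∏ i, w i) ^ ((1:ℝ)/d)) := by
                apply mul_le_mul_of_nonneg_left _ hf
                calc (1/(d:ℝ)) * A ≤ (1/(d:ℝ)) ^ ((1:ℝ)/d) * A :=
                      mul_le_mul_of_nonneg_right e3 hApos.le
                  _ = ((1/(d:ℝ)) * t^(d-1)) ^ ((1:ℝ)/d) := e2.symm
                  _ ≤ (∏ i, w i) ^ ((1:ℝ)/d) := e1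
            _ = (∏ i, w i) ^ ((1:ℝ)/d) * f := mul_comm _ _
            _ ≤ t * ∑ i, lam i := h
        rw [← e4] at c1
        -- c1 : f * (1/d * A) ≤ A * t^{1/d} * T
        have hq0 : 0 ≤ t ^ ((1:ℝ)/d) := Real.rpow_nonneg ht0.le _
        have c2 : f * (1/(d:ℝ)) ≤ t ^ ((1:ℝ)/d) * ∑ i, lam i := by
          have c3 : f * (1/(d:ℝ)) * A ≤ (t ^ ((1:ℝ)/d) * ∑ i, lam i) * A := by
            nlinarith [c1]
          exact le_of_mul_le_mul_right c3 hApos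
        have c4 := mul_le_mul_of_nonneg_left c2 hdR.le
        rw [show (d:ℝ) * (f * (1/(d:ℝ))) = f by field_simp] at c4
        calc f ≤ (d:ℝ) * (t ^ ((1:ℝ)/d) * ∑ i, lam i) := c4
          _ = (d:ℝ) * (∑ i, lam i) * t ^ ((1:ℝ)/d) := by ring
      have hf0 : f = 0 := by
        by_contra hne
        have hfpos : 0 < f := lt_of_le_of_ne hf (Ne.symm hne)
        set T := ∑ i, lam i with hTdef
        clear_value T
        set K := (d:ℝ) * T + 1 with hK
        clear_value K
        have hK0 : 0 < K := by nlinarith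
        set r := (f / K)^d with hr
        clear_value r
        have hr0 : 0 < r := by rw [hr]; positivity
        set t := min (1/(d:ℝ)) (r/2) with ht
        clear_value t
        have ht0 : 0 < t := by
          rw [ht]; exact lt_min (by positivity) (by positivity)
        have htd : t ≤ 1/d := by rw [ht]; exact min_le_left _ _
        have h := hkey t ht0 htd
        have htr : t < r := by
          rw [ht]; exact lt_of_le_of_lt (min_le_right _ _) (by linarith)
        have h5 : t ^ ((1:ℝ)/d) < f / K := by
          calc t ^ ((1:ℝ)/d) < r ^ ((1:ℝ)/d) :=
              Real.rpow_lt_rpow ht0.le htr (by positivity)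
            _ = f / K := by
              rw [hr, one_div, Real.pow_rpow_inv_natCast (by positivity) hdne]
        have hq0 : 0 ≤ t ^ ((1:ℝ)/d) := Real.rpow_nonneg ht0.le _
        have h6 : (d:ℝ) * T * t ^ ((1:ℝ)/d) < K * (f/K) := by
          have hTd0 : 0 ≤ (d:ℝ) * T := by positivity
          have hfK : 0 < f / K := by positivity
          nlinarith [mul_le_mul_of_nonneg_left h5.le hTd0]
        have h7 : K * (f/K) = f := by field_simp
        rw [h7] at h6
        linarith
      rw [hdetN, hf0]
      rw [show ∏ i, lam i = 0 from Finset.prod_eq_zero (Finset.mem_univ j0) hj0,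
        zero_pow hdne, mul_zero]
    · push_neg at hzero
      have hlpos : ∀ j, 0 < lam j := fun j => (hlam0 j).lt_of_ne (Ne.symm (hzero j))
      obtain ⟨hSpos, w, hw0, hw1, hwl, hwp⟩ := wstar hd lam hlpos
      set P := ∏ i, lam i with hPdef
      clear_value P
      have hPpos : 0 < P := by
        rw [hPdef]; exact Finset.prod_pos fun i _ => hlpos i
      set D := P ^ ((1:ℝ)/d) with hD
      clear_value D
      have hDpos : 0 < D := by rw [hD]; exact Real.rpow_pos_of_pos hPpos _
      have hDd : D ^ d = P := by
        rw [hD, one_div, Real.rpow_inv_natCast_pow hPpos.le hdne]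
      have hle : f ≤ (d:ℝ) * D := by
        have h := hwle w hw0 hw1
        rw [hwl, hwp] at h
        have h2 : D⁻¹ * f ≤ (d:ℝ) := by
          rw [div_mul_eq_mul_div, div_le_div_iff_of_pos_right hSpos] at h
          exact h
        calc f = D * (D⁻¹ * f) := by field_simp
          _ ≤ D * d := mul_le_mul_of_nonneg_left h2 hDpos.le
          _ = (d:ℝ) * D := mul_comm _ _
      have hmin : ∃ j1 : Fin d, ∀ j, lam j1 ≤ lam j := by
        have hne : (Finset.univ : Finset (Fin d)).Nonempty := by
          have : Nonempty (Fin d) := ⟨⟨0, by omega⟩⟩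
          exact Finset.univ_nonempty
        obtain ⟨j1, _, hj1⟩ := Finset.exists_min_image Finset.univ lam hne
        exact ⟨j1, fun j => hj1 j (Finset.mem_univ j)⟩
      obtain ⟨j1, hj1⟩ := hmin
      set μ := lam j1 with hmu
      clear_value μ
      have hμpos : 0 < μ := by rw [hmu]; exact hlpos j1
      have hmono : ∀ a : Matrix (Fin d) (Fin d) ℝ, a.PosSemidef → a.trace = 1 →
          μ ≤ (a * (-M)).trace := by
        intro a haP haT
        have hrem : ((-M) - μ • (1 : Matrix (Fin d) (Fin d) ℝ)).PosSemidef := by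
          have e : (-M) - μ • (1 : Matrix (Fin d) (Fin d) ℝ)
              = U * diagonal (fun i => lam i - μ) * star U := by
            conv_lhs => rw [hspec]
            have e1 : diagonal (fun i => lam i - μ) =
                diagonal lam - μ • (1 : Matrix (Fin d) (Fin d) ℝ) := by
              rw [Matrix.smul_one_eq_diagonal]
              rw [← Matrix.diagonal_sub]
            rw [e1, Matrix.mul_sub, Matrix.sub_mul]
            congr 1
            rw [Matrix.mul_smul, Matrix.smul_mul, Matrix.mul_one, hU2]
          rw [e]
          exact conj_posSemidef _ (fun i => sub_nonneg.mpr (hj1 i))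
        have h := trace_mul_nonneg haP hrem
        rw [Matrix.mul_sub, Matrix.trace_sub] at h
        have e2 : (a * (μ • (1 : Matrix (Fin d) (Fin d) ℝ))).trace = μ := by
          rw [Matrix.mul_smul, Matrix.mul_one, Matrix.trace_smul, haT, smul_eq_mul,
            mul_one]
        rw [e2] at h
        linarith
      have hge : (d:ℝ) * D ≤ f := by
        by_contra hlt
        push_neg at hlt
        set c := (d:ℝ)*D - f with hc
        clear_value c
        have hcpos : 0 < c := by linarith
        set ε := μ * c / (2 * (c + f)) with hε
        clear_value ε
        have hcf : 0 < c + f := by linarith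
        have hεpos : 0 < ε := by
          rw [hε]; exact div_pos (mul_pos hμpos hcpos) (by linarith)
        obtain ⟨x, hxS, hxgt⟩ := exists_lt_of_lt_csSup hnonempty
          (show -ε < sSup S by rw [hsup]; linarith)
        obtain ⟨a, ⟨haP, haT⟩, rfl⟩ := hxS
        set q := a.det ^ ((1:ℝ)/d) with hq
        clear_value q
        have hq0 : 0 ≤ q := by
          rw [hq]; exact Real.rpow_nonneg (psd_det_nonneg haP) _
        have htr1 : (d:ℝ) * (q * D) ≤ (a * (-M)).trace := by
          have h := trace_mul_amgm hd haP hNpsd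
          rw [hdetN, Real.mul_rpow (psd_det_nonneg haP) hPpos.le, ← hq, ← hD] at h
          exact h
        have hFa : F a = -(a * (-M)).trace + q * f := by
          simp only [hF, hq]
          rw [show a * M = -(a * (-M)) by rw [Matrix.mul_neg, neg_neg],
            Matrix.trace_neg]
        rw [hFa] at hxgt
        have hmono1 := hmono a haP haT
        have hqc : q * c = (d:ℝ) * (q * D) - q * f := by rw [hc]; ring
        have h1 : q * c < ε := by linarith
        have h2 : μ - ε < q * f := by linarith
        have hcne : c ≠ 0 := hcpos.ne'
        have hcfne : c + f ≠ 0 := hcf.ne'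
        have hq2 : q ≤ ε / c := by
          rw [le_div_iff₀ hcpos]; exact h1.le
        have h3 : q * f ≤ ε / c * f := mul_le_mul_of_nonneg_right hq2 hf
        have h4 : μ < ε + ε / c * f := by linarith
        have h5 : ε + ε / c * f = μ / 2 := by
          rw [hε]; field_simp
        linarith
      have hfeq : f = (d:ℝ) * D := le_antisymm hle hge
      rw [hdetN, ← hDd, hfeq, mul_pow, _root_.zpow_neg, zpow_natCast]
      field_simp
  · -- backward direction
    rintro ⟨hNpsd, hdet⟩
    have hlam0 : ∀ j, 0 ≤ lam j := conj_psd_iff hU1 lam (hspec ▸ hNpsd)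
    have hP : ∏ i, lam i = (f/(d:ℝ))^d := by
      rw [← hdetN, hdet, div_pow, _root_.zpow_neg, zpow_natCast]
      field_simp
    apply le_antisymm
    · apply csSup_le hnonempty
      rintro x ⟨a, ⟨haP, haT⟩, rfl⟩
      have h := trace_mul_amgm hd haP hNpsd
      rw [hdetN, hP] at h
      have hfd : ((a.det * (f/(d:ℝ))^d)) ^ ((1:ℝ)/d)
          = a.det ^ ((1:ℝ)/d) * (f/d) := by
        rw [Real.mul_rpow (psd_det_nonneg haP) (by positivity), one_div,
          Real.pow_rpow_inv_natCast (by positivity) hdne]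
      rw [hfd] at h
      have hFa : F a = -(a * (-M)).trace + a.det ^ ((1:ℝ)/d) * f := by
        simp only [hF]
        rw [show a * M = -(a * (-M)) by rw [Matrix.mul_neg, neg_neg],
          Matrix.trace_neg]
      rw [hFa]
      have e : (d:ℝ) * (a.det ^ ((1:ℝ)/d) * (f/d)) = a.det ^ ((1:ℝ)/d) * f := by
        field_simp
      linarith
    · rcases eq_or_lt_of_le hf with hf0 | hfpos
      · have hprod0 : ∏ i, lam i = 0 := by
          rw [hP, ← hf0, zero_div, zero_pow hdne]
        obtain ⟨j0, _, hj0⟩ := Finset.prod_eq_zero_iff.mp hprod0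
        obtain ⟨hs0, hs1, hs2⟩ := single_facts j0
        have hval : -∑ i, Pi.single (M := fun _ => ℝ) j0 1 i * lam i
            + (∏ i, Pi.single (M := fun _ => ℝ) j0 1 i) ^ ((1:ℝ)/d) * f = 0 := by
          rw [← hf0, mul_zero, add_zero, hs2 lam, hj0, neg_zero]
        calc (0:ℝ) = _ := hval.symm
          _ ≤ sSup S := le_csSup hbdd (hmem _ hs0 hs1)
      · have hlpos : ∀ j, 0 < lam j := by
          intro j
          rcases (hlam0 j).lt_or_eq with h | h
          · exact h
          · exfalso
            have h0 : ∏ i, lam i = 0 := Finset.prod_eq_zero (Finset.mem_univ j) h.symm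
            rw [hP] at h0
            have h1 : (0:ℝ) < (f/(d:ℝ))^d := by positivity
            linarith
        obtain ⟨hSpos, w, hw0, hw1, hwl, hwp⟩ := wstar hd lam hlpos
        have hPfd : (∏ i, lam i) ^ ((1:ℝ)/d) = f/d := by
          rw [hP, one_div, Real.pow_rpow_inv_natCast (by positivity) hdne]
        set s := ∑ i, (lam i)⁻¹ with hs
        clear_value s
        have hval : -∑ i, w i * lam i + (∏ i, w i) ^ ((1:ℝ)/d) * f = 0 := by
          rw [hwl, hwp, hPfd]
          have e : (f/(d:ℝ))⁻¹ / s * f = (d:ℝ)/s := by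
            rw [inv_div]
            field_simp [hfpos.ne']
          rw [e]
          ring
        calc (0:ℝ) = _ := hval.symm
          _ ≤ sSup S := le_csSup hbdd (hmem w hw0 hw1)
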